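/- Let A be a set, X ⊆ A, and s a permutation of A moving only finitely many points such that X meets every orbit of s or, more simply, such that for every x ∈ X some positive power of s maps x into X. Then the map s ▷ X : X → X defined by (s ▷ X)(x) = s^(i+1)(x), where i is the least natural number with s^(i+1)(x) ∈ X, is a well-defined permutation of X. -/

import Mathlib

private lemma fix_of_pow_fix {A : Type*} (s : Equiv.Perm A) {b : A} (h : s b = b) :
    ∀ k : ℕ, (s ^ k) b = b := by
  intro k
  induction k with
  | zero => simp
  | succ n ih => rw [pow_succ, Equiv.Perm.mul_apply, h]; exact ih

private lemma exists_pow_fix {A : Type*} (s : Equiv.Perm A)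
    (hfin : {a | s a ≠ a}.Finite) (a : A) : ∃ m, 0 < m ∧ (s ^ m) a = a := by
  have horb : ∀ k : ℕ, (s ^ k) a ∈ {b | s b ≠ b} ∪ {a} := by
    intro k
    by_cases h : s ((s ^ k) a) = (s ^ k) a
    · right
      have h1 : s⁻¹ ((s ^ k) a) = (s ^ k) a := by
        conv_lhs => rw [← h]
        simp
      have h2 : (s⁻¹ ^ k) ((s ^ k) a) = (s ^ k) a := fix_of_pow_fix s⁻¹ h1 k
      have h3 : (s⁻¹ ^ k) ((s ^ k) a) = a := by
        rw [inv_pow, ← Equiv.Perm.mul_apply, inv_mul_cancel, Equiv.Perm.one_apply]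
      rw [h3] at h2
      exact h2.symm
    · left; exact h
  haveI := (hfin.union (Set.finite_singleton a)).to_subtype
  obtain ⟨i, j, hij, hieqj⟩ := Finite.exists_ne_map_eq_of_infinite
    (fun k : ℕ => (⟨(s ^ k) a, horb k⟩ : ({b | s b ≠ b} ∪ {a} : Set A)))
  have heq : (s ^ i) a = (s ^ j) a := congrArg Subtype.val hieqj
  rcases lt_or_gt_of_ne hij with h | h
  all_goals {
    refine ⟨(max i j) - (min i j), by omega, ?_⟩
    have key : ∀ u v : ℕ, u < v → (s ^ u) a = (s ^ v) a → (s ^ (v - u)) a = a := by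
      intro u v huv he
      have : (s ^ u) ((s ^ (v - u)) a) = (s ^ u) a := by
        rw [← Equiv.Perm.mul_apply, ← pow_add]
        rw [show u + (v - u) = v by omega]
        exact he.symm
      exact (s ^ u).injective this
    first
    | exact (by simpa [min_eq_left h.le, max_eq_right h.le] using key i j h heq)
    | exact (by simpa [min_eq_right h.le, max_eq_left h.le] using key j i h heq.symm)
  }

/-- The first-return map `s ▷ X` is a well-defined permutation of `X`: there is a
permutation `e` of `X` such that `e x = s^(i+1) x` where `i` is the least natural
number with `s^(i+1) x ∈ X`. -/
theorem stmt_6 {A : Type*} (s : Equiv.Perm A) (X : Set A)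
    (hfin : {a | s a ≠ a}.Finite)
    (hret : ∀ x ∈ X, ∃ i : ℕ, (s ^ (i + 1)) x ∈ X) :
    ∃ e : Equiv.Perm X, ∀ (x : X) (i : ℕ),
      (∀ j < i, (s ^ (j + 1)) (x : A) ∉ X) → (s ^ (i + 1)) (x : A) ∈ X →
        (e x : A) = (s ^ (i + 1)) (x : A) := by
  classical
  set n : X → ℕ := fun x => Nat.find (hret x x.2) with hn
  have hspec : ∀ x : X, (s ^ (n x + 1)) (x : A) ∈ X := fun x => Nat.find_spec (hret x x.2)
  have hmin : ∀ (x : X) (j : ℕ), j < n x → (s ^ (j + 1)) (x : A) ∉ X :=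
    fun x j hj => Nat.find_min (hret x x.2) hj
  have huniq : ∀ (x : X) (i : ℕ), (∀ j < i, (s ^ (j + 1)) (x : A) ∉ X) →
      (s ^ (i + 1)) (x : A) ∈ X → n x = i := by
    intro x i hm hi
    rcases lt_trichotomy (n x) i with h | h | h
    · exact absurd (hspec x) (hm _ h)
    · exact h
    · exact absurd hi (hmin x i h)
  set f : X → X := fun x => ⟨(s ^ (n x + 1)) (x : A), hspec x⟩ with hf
  have hinj : Function.Injective f := by
    intro x y hxy
    have heq : (s ^ (n x + 1)) (x : A) = (s ^ (n y + 1)) (y : A) :=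
      congrArg Subtype.val hxy
    have key : ∀ x y : X, n x ≤ n y →
        (s ^ (n x + 1)) (x : A) = (s ^ (n y + 1)) (y : A) → x = y := by
      intro x y hle he
      have h1 : (s ^ (n x + 1)) ((s ^ (n y - n x)) (y : A)) = (s ^ (n x + 1)) (x : A) := by
        rw [← Equiv.Perm.mul_apply, ← pow_add, show n x + 1 + (n y - n x) = n y + 1 by omega]
        exact he.symm
      have h2 : (s ^ (n y - n x)) (y : A) = (x : A) := (s ^ (n x + 1)).injective h1
      rcases eq_or_lt_of_le hle with h | h
      · have : (y : A) = (x : A) := by simpa [h] using h2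
        exact Subtype.ext this.symm
      · exfalso
        apply hmin y (n y - n x - 1) (by omega)
        rw [show n y - n x - 1 + 1 = n y - n x by omega, h2]
        exact x.2
    rcases le_total (n x) (n y) with h | h
    · exact key x y h heq
    · exact (key y x h heq.symm).symm
  have hsurj : Function.Surjective f := by
    intro y
    obtain ⟨m, hm, hfix⟩ := exists_pow_fix s hfin (y : A)
    have hQ : ∃ i : ℕ, (s⁻¹ ^ (i + 1)) (y : A) ∈ X := by
      refine ⟨m - 1, ?_⟩
      rw [show m - 1 + 1 = m by omega, inv_pow]
      have : (s ^ m)⁻¹ ((s ^ m) (y : A)) = (s ^ m)⁻¹ (y : A) := by rw [hfix]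
      rw [show (s ^ m)⁻¹ ((s ^ m) (y : A)) = (y : A) from (s ^ m).symm_apply_apply _] at this
      rw [← this]; exact y.2
    set i0 := Nat.find hQ with hi0
    have hx : (s⁻¹ ^ (i0 + 1)) (y : A) ∈ X := Nat.find_spec hQ
    set x : X := ⟨(s⁻¹ ^ (i0 + 1)) (y : A), hx⟩ with hxdef
    have hcancel : ∀ k ≤ i0 + 1,
        (s ^ k) ((s⁻¹ ^ (i0 + 1)) (y : A)) = (s⁻¹ ^ (i0 + 1 - k)) (y : A) := by
      intro k hk
      apply (s ^ (i0 + 1 - k)).injective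
      rw [← Equiv.Perm.mul_apply, ← pow_add, show i0 + 1 - k + k = i0 + 1 by omega]
      rw [inv_pow, inv_pow, ← Equiv.Perm.mul_apply, mul_inv_cancel, Equiv.Perm.one_apply,
        ← Equiv.Perm.mul_apply, mul_inv_cancel, Equiv.Perm.one_apply]
    refine ⟨x, ?_⟩
    have hnx : n x = i0 := by
      apply huniq
      · intro j hj
        have : (s ^ (j + 1)) (x : A) = (s⁻¹ ^ (i0 - j)) (y : A) := by
          rw [hxdef]
          simpa using hcancel (j + 1) (by omega)
        rw [this, show i0 - j = (i0 - j - 1) + 1 by omega]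
        exact Nat.find_min hQ (by omega)
      · have : (s ^ (i0 + 1)) (x : A) = (y : A) := by
          rw [hxdef]; simp [hcancel (i0 + 1) le_rfl]
        rw [this]; exact y.2
    have : (s ^ (i0 + 1)) (x : A) = (y : A) := by
      rw [hxdef]; simp [hcancel (i0 + 1) le_rfl]
    apply Subtype.ext
    show (s ^ (n x + 1)) (x : A) = (y : A)
    rw [hnx, this]
  refine ⟨Equiv.ofBijective f ⟨hinj, hsurj⟩, ?_⟩
  intro x i hm hi
  show ((f x : X) : A) = _
  have := huniq x i hm hi
  show (s ^ (n x + 1)) (x : A) = (s ^ (i + 1)) (x : A)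
  rw [this]
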